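/- arXiv:1103.2202 — 2 statements merged into one kernel-verified Lean document; each statement's English description precedes it below -/
import Mathlib

section
/- If P_G is not simplicial, then G possesses a homogeneous cycle C with vertex set {i_1,...,i_l} satisfying μ_C(i_a) - μ_C(i_b) ≤ dist_G(i_a, i_b) for all 1 ≤ a, b ≤ l. -/
open Finset

/-- `ρ(e) = e_{i} - e_{j}` for an arrow `e = (i,j)`. -/
def rho {V : Type*} [DecidableEq V] (e : V × V) : V → ℝ :=
  fun k => (if k = e.1 then (1 : ℝ) else 0) - (if k = e.2 then (1 : ℝ) else 0)

/-- The polytope `P_G` associated with the arrow set `A` of a directed graph. -/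
def polyG {V : Type*} [DecidableEq V] (A : Finset (V × V)) : Set (V → ℝ) :=
  convexHull ℝ (rho '' (A : Set (V × V)))

/-- Connectivity of the underlying undirected graph of the directed graph with arrow set `A`. -/
def GConnected {V : Type*} [DecidableEq V] (A : Finset (V × V)) : Prop :=
  (SimpleGraph.fromRel (fun i j => (i, j) ∈ A)).Connected

/-- Cyclic successor on `Fin l`. -/
def succAt {l : ℕ} (h : 0 < l) (j : Fin l) : Fin l :=
  ⟨((j : ℕ) + 1) % l, Nat.mod_lt _ h⟩

/-- The data of a cycle in a directed graph on the vertex set `V`: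
a list of at least two distinct vertices, cyclically ordered, together with, for each
edge of the cycle, a choice of direction (`ε j = true` means the arrow points forwards). -/
structure PreCycle (V : Type*) where
  l : ℕ
  two_le : 2 ≤ l
  v : Fin l → V
  ε : Fin l → Bool
  inj : Function.Injective v

namespace PreCycle

variable {V : Type*}

theorem pos (C : PreCycle V) : 0 < C.l :=
  lt_of_lt_of_le Nat.zero_lt_two C.two_le

/-- The cyclically next index. -/
def nxt (C : PreCycle V) (j : Fin C.l) : Fin C.l := succAt C.pos j

/-- The arrow of the cycle corresponding to its `j`-th edge. -/
def arrow (C : PreCycle V) (j : Fin C.l) : V × V :=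
  if C.ε j then (C.v j, C.v (C.nxt j)) else (C.v (C.nxt j), C.v j)

/-- `C` is a cycle in the directed graph with arrow set `A`. -/
def IsCycleIn [DecidableEq V] (C : PreCycle V) (A : Finset (V × V)) : Prop :=
  (∀ j, C.arrow j ∈ A) ∧ Function.Injective C.arrow

/-- A cycle is homogeneous if it has as many forward arrows as backward arrows. -/
def Homogeneous (C : PreCycle V) : Prop :=
  2 * (Finset.univ.filter fun j => C.ε j = true).card = C.l

/-- A directed cycle: all arrows point in the direction of traversal. -/
def IsDirected (C : PreCycle V) : Prop := ∀ j, C.ε j = true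

/-- The defining property of the function `μ_C` attached to a homogeneous cycle `C`
(here recorded as a function of the position along the cycle; since the vertices of the
cycle are distinct this is the same as a function on the cycle vertices):
it is nonnegative, decreases by `1` along forward arrows, increases by `1` along
backward arrows, and has minimum value `0`. -/
def IsMu (C : PreCycle V) (μ : Fin C.l → ℤ) : Prop :=
  (∀ j, 0 ≤ μ j) ∧ (∀ j, μ (C.nxt j) = if C.ε j then μ j - 1 else μ j + 1) ∧ (∃ j, μ j = 0)

end PreCycle

/-- Every arrow of the directed graph with arrow set `A` lies in a directed cycle. -/
def EveryArrowInDirCycle {V : Type*} [DecidableEq V] (A : Finset (V × V)) : Prop :=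
  ∀ e ∈ A, ∃ C : PreCycle V, C.IsCycleIn A ∧ C.IsDirected ∧ ∃ j, C.arrow j = e

/-- The dimension of a subset of `ℝ^V` (the dimension of its affine hull). -/
noncomputable def pdim {V : Type*} (s : Set (V → ℝ)) : ℕ :=
  Module.finrank ℝ (vectorSpan ℝ s)

/-- `F` is a facet of the polytope `P`: a nonempty exposed face of codimension one. -/
def IsFacetOf {V : Type*} (F P : Set (V → ℝ)) : Prop :=
  IsExposed ℝ P F ∧ F.Nonempty ∧ pdim F + 1 = pdim P

/-- A polytope is simplicial if the vertices of every facet are affinely independent. -/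
def Simplicial {V : Type*} (P : Set (V → ℝ)) : Prop :=
  ∀ F : Set (V → ℝ), IsFacetOf F P →
    AffineIndependent ℝ (fun x : (F.extremePoints ℝ) => (x : V → ℝ))

/-- The lattice `ℤ^V ∩ {x : Σ x_i = 0}`, as a subset of `ℝ^V`. -/
def latticeSet (V : Type*) [Fintype V] : Set (V → ℝ) :=
  {x | (∀ i, ∃ z : ℤ, x i = (z : ℝ)) ∧ ∑ i, x i = 0}

/-- The set of integer points of `ℝ^V`. -/
def intLat (V : Type*) : Set (V → ℝ) :=
  {x | ∀ i, ∃ z : ℤ, x i = (z : ℝ)}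

/-- `W` is a `ℤ`-basis of (the additive group generated by) `L`. -/
def IsZBasisOf {V : Type*} (W L : Set (V → ℝ)) : Prop :=
  W ⊆ L ∧ LinearIndependent ℤ (fun x : W => (x : V → ℝ)) ∧
    L ⊆ (Submodule.span ℤ W : Set (V → ℝ))

/-- There is a directed path of length `n` from `i` to `j` in the directed graph `A`. -/
def HasDPath {V : Type*} (A : Finset (V × V)) (i j : V) (n : ℕ) : Prop :=
  ∃ f : Fin (n + 1) → V, f 0 = i ∧ f (Fin.last n) = j ∧
    ∀ k : Fin n, (f k.castSucc, f k.succ) ∈ A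

/-- The underlying undirected graph of `A` contains an even cycle. -/
def HasEvenCycle {V : Type*} [DecidableEq V] (A : Finset (V × V)) : Prop :=
  ∃ C : PreCycle V, 3 ≤ C.l ∧ Even C.l ∧
    ∀ j, (C.v j, C.v (C.nxt j)) ∈ A ∨ (C.v (C.nxt j), C.v j) ∈ A

lemma rho_eq_single {d : ℕ} (e : Fin d × Fin d) :
    rho e = Pi.single e.1 (1:ℝ) - Pi.single e.2 (1:ℝ) := by
  funext k
  simp [rho, Pi.single_apply]

lemma succAt_injective {l : ℕ} (h : 0 < l) : Function.Injective (succAt h) := by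
  intro j k hjk
  have e : (j.val + 1) % l = (k.val + 1) % l := congrArg Fin.val hjk
  have hj := j.isLt; have hk := k.isLt
  apply Fin.ext
  rcases Nat.lt_or_ge (j.val + 1) l with h1 | h1 <;> rcases Nat.lt_or_ge (k.val + 1) l with h2 | h2
  · rw [Nat.mod_eq_of_lt h1, Nat.mod_eq_of_lt h2] at e; omega
  · have hkl : k.val + 1 = l := by omega
    rw [Nat.mod_eq_of_lt h1, hkl, Nat.mod_self] at e; omega
  · have hjl : j.val + 1 = l := by omega
    rw [Nat.mod_eq_of_lt h2, hjl, Nat.mod_self] at e; omega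
  · omega

lemma succAt_bijective {l : ℕ} (h : 0 < l) : Function.Bijective (succAt h) :=
  Finite.injective_iff_bijective.mp (succAt_injective h)

lemma path_bound {d : ℕ} (A : Finset (Fin d × Fin d)) (a : Fin d → ℝ) (m : ℝ)
    (hle : ∀ e ∈ A, a e.1 - a e.2 ≤ m) :
    ∀ (n : ℕ) (p : Fin (n+1) → Fin d), (∀ k : Fin n, (p k.castSucc, p k.succ) ∈ A) →
      a (p 0) - a (p (Fin.last n)) ≤ n * m := by
  intro n
  induction n with
  | zero => intro p _; simp
  | succ n ih =>
    intro p hp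
    have h1 : a (p 0) - a (p (Fin.castSucc (Fin.last n))) ≤ n * m := by
      have := ih (fun k => p k.castSucc) (fun k => by
        have h := hp k.castSucc
        have hc : (k.castSucc : Fin (n+1)).succ = (k.succ).castSucc := by
          apply Fin.ext; simp
        rwa [hc] at h)
      simpa using this
    have h2 : a (p (Fin.castSucc (Fin.last n))) - a (p (Fin.last (n+1))) ≤ m := by
      have h := hp (Fin.last n)
      have := hle _ h
      have hs : (Fin.last n).succ = Fin.last (n+1) := rfl
      rwa [hs] at this
    push_cast
    linarith

lemma exists_cycle {V : Type*} [Finite V] (R : V → V → Prop)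
    (hsymm : ∀ x y, R x y → R y x) (hirr : ∀ x, ¬ R x x)
    (hdeg : ∀ x y, R x y → ∃ z, z ≠ y ∧ R x z)
    (x₀ y₀ : V) (h0 : R x₀ y₀) :
    ∃ (L : ℕ) (hL : 3 ≤ L) (f : Fin L → V), Function.Injective f ∧
      ∀ j, R (f j) (f (succAt (by omega) j)) := by
  classical
  have step : ∀ p : V × V, R p.1 p.2 → ∃ q : V × V, R q.1 q.2 ∧ q.1 = p.2 ∧ q.2 ≠ p.1 := by
    intro p hp
    obtain ⟨z, hz, hRz⟩ := hdeg p.2 p.1 (hsymm _ _ hp)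
    exact ⟨(p.2, z), hRz, rfl, hz⟩
  let G : ℕ → {p : V × V // R p.1 p.2} := fun n => Nat.rec ⟨(x₀, y₀), h0⟩
    (fun _ pp => ⟨Classical.choose (step pp.1 pp.2), (Classical.choose_spec (step pp.1 pp.2)).1⟩) n
  have hGdef : ∀ n, (G (n+1)).val = Classical.choose (step (G n).1 (G n).2) := fun n => rfl
  have hG1 : ∀ n, (G (n+1)).val.1 = (G n).val.2 := by
    intro n; rw [hGdef]; exact (Classical.choose_spec (step (G n).1 (G n).2)).2.1
  have hG2 : ∀ n, (G (n+1)).val.2 ≠ (G n).val.1 := by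
    intro n; rw [hGdef]; exact (Classical.choose_spec (step (G n).1 (G n).2)).2.2
  set f : ℕ → V := fun n => (G n).val.1 with hf
  have hcons : ∀ n, R (f n) (f (n+1)) := by
    intro n
    have h1 : f (n+1) = (G n).val.2 := hG1 n
    rw [show f n = (G n).val.1 from rfl, h1]
    exact (G n).2
  have hne : ∀ n, f n ≠ f (n+1) := fun n h => hirr _ (h ▸ hcons n)
  have hnb : ∀ n, f (n+2) ≠ f n := by
    intro n
    have h1 : f (n+2) = (G (n+1)).val.2 := hG1 (n+1)
    rw [h1]; exact hG2 n
  have hPex : ∃ n2, ∃ n1, n1 < n2 ∧ f n1 = f n2 := by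
    obtain ⟨x, y, hxy, hfe⟩ := Finite.exists_ne_map_eq_of_infinite f
    rcases lt_or_gt_of_ne hxy with hlt | hlt
    · exact ⟨y, x, hlt, hfe⟩
    · exact ⟨x, y, hlt, hfe.symm⟩
  let N := Nat.find hPex
  obtain ⟨n1, hn1, hfn⟩ : ∃ n1, n1 < N ∧ f n1 = f N := Nat.find_spec hPex
  have hmin : ∀ i j, i < j → j < N → f i ≠ f j := by
    intro i j hij hjN hfe
    exact Nat.find_min hPex hjN ⟨i, hij, hfe⟩
  have hL1 : N ≠ n1 + 1 := by
    intro hcontra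
    exact hne n1 (by rw [hcontra] at hfn; exact hfn)
  have hL2 : N ≠ n1 + 2 := by
    intro hcontra
    exact hnb n1 (by rw [hcontra] at hfn; exact hfn.symm)
  refine ⟨N - n1, by omega, fun j => f (n1 + j.val), ?_, ?_⟩
  · intro j k hjk
    apply Fin.ext
    by_contra hval
    have hjlt := j.isLt; have hklt := k.isLt
    rcases Nat.lt_or_ge j.val k.val with hlt | hge
    · exact hmin (n1 + j.val) (n1 + k.val) (by omega) (by omega) hjk
    · exact hmin (n1 + k.val) (n1 + j.val) (by omega) (by omega) hjk.symm
  · intro j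
    have hjlt := j.isLt
    show R (f (n1 + j.val)) (f (n1 + ((j.val + 1) % (N - n1))))
    rcases Nat.lt_or_ge (j.val + 1) (N - n1) with hc | hc
    · rw [Nat.mod_eq_of_lt hc]
      have := hcons (n1 + j.val)
      rwa [show n1 + j.val + 1 = n1 + (j.val + 1) from by omega] at this
    · have hj1 : j.val + 1 = N - n1 := by omega
      rw [hj1, Nat.mod_self]
      have := hcons (n1 + j.val)
      rw [show n1 + j.val + 1 = N from by omega] at this
      rwa [← hfn] at this

set_option maxHeartbeats 1000000 in
/-- if `P_G` is not simplicial, then `G` has a homogeneous cycle `C` with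
`μ_C(i_a) - μ_C(i_b) ≤ dist_G(i_a, i_b)` for all `a, b` (equivalently,
`μ_C(i_a) - μ_C(i_b) ≤ n` for every directed path of length `n` from `i_a` to `i_b`). -/
theorem stmt8 {d : ℕ} (A : Finset (Fin d × Fin d)) (hconn : GConnected A)
    (h : EveryArrowInDirCycle A) (hns : ¬ Simplicial (polyG A)) :
    ∃ C : PreCycle (Fin d), C.IsCycleIn A ∧ C.Homogeneous ∧
      ∃ μ : Fin C.l → ℤ, C.IsMu μ ∧
        ∀ a b : Fin C.l, ∀ n : ℕ, HasDPath A (C.v a) (C.v b) n → μ a - μ b ≤ (n : ℤ) := by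
  classical
  unfold Simplicial at hns
  push_neg at hns
  obtain ⟨F, hF, hdep⟩ := hns
  obtain ⟨hexp, hFne, hdim⟩ := hF
  obtain ⟨l, hFrepr⟩ := hexp hFne
  obtain ⟨x₀, hx₀F⟩ := hFne
  have hx₀F' := hx₀F
  rw [hFrepr] at hx₀F'
  set m := l x₀ with hm_def
  have hFP : F ⊆ polyG A := by rw [hFrepr]; exact fun x hx => hx.1
  have hle : ∀ y ∈ polyG A, l y ≤ m := hx₀F'.2
  have hfacet : ∀ x ∈ F, l x = m := by
    intro x hx
    have hx' := hx
    rw [hFrepr] at hx'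
    exact le_antisymm (hle x hx'.1) (hx'.2 x₀ hx₀F'.1)
  set a : Fin d → ℝ := fun k => l (Pi.single k (1:ℝ)) with ha
  have hlrho : ∀ e : Fin d × Fin d, l (rho e) = a e.1 - a e.2 := by
    intro e; rw [rho_eq_single, map_sub]
  have hrhoP : ∀ e ∈ A, rho e ∈ polyG A := fun e he =>
    subset_convexHull ℝ _ ⟨e, he, rfl⟩
  have harr_le : ∀ e ∈ A, a e.1 - a e.2 ≤ m := fun e he => by
    rw [← hlrho]; exact hle _ (hrhoP e he)
  -- m > 0
  have hm : 0 < m := by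
    by_contra hm0
    push_neg at hm0
    have himg : rho '' (A : Set (Fin d × Fin d)) ⊆ F := by
      rintro _ ⟨e, he, rfl⟩
      obtain ⟨C', hC'cyc, hC'dir, j₀, hj₀⟩ := h e he
      have harr : ∀ j, C'.arrow j = (C'.v j, C'.v (C'.nxt j)) := fun j => by
        rw [PreCycle.arrow, if_pos (hC'dir j)]
      have hsum0 : ∑ j, rho (C'.arrow j) = 0 := by
        have hrw : ∀ j ∈ (univ : Finset (Fin C'.l)),
            rho (C'.arrow j) = Pi.single (C'.v j) (1:ℝ) - Pi.single (C'.v (C'.nxt j)) 1 :=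
          fun j _ => by rw [harr j, rho_eq_single]
        rw [Finset.sum_congr rfl hrw, Finset.sum_sub_distrib]
        have hb : ∑ j, (Pi.single (C'.v (C'.nxt j)) (1:ℝ) : Fin d → ℝ)
            = ∑ j, (Pi.single (C'.v j) (1:ℝ) : Fin d → ℝ) :=
          Fintype.sum_bijective C'.nxt (succAt_bijective C'.pos) _ _ (fun j => rfl)
        rw [hb, sub_self]
      have hl0 : ∑ j, l (rho (C'.arrow j)) = 0 := by rw [← map_sum, hsum0, map_zero]
      have hterm : ∀ j ∈ (univ : Finset (Fin C'.l)), l (rho (C'.arrow j)) ≤ 0 :=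
        fun j _ => (hle _ (hrhoP _ (hC'cyc.1 j))).trans hm0
      have hall := (Finset.sum_eq_zero_iff_of_nonpos hterm).1 hl0
      rw [hFrepr]
      refine ⟨hrhoP e he, fun y hy => ?_⟩
      have he0 : l (rho e) = 0 := by rw [← hj₀]; exact hall j₀ (mem_univ _)
      rw [he0]
      exact (hle y hy).trans hm0
    have hFeq : F = polyG A :=
      hFP.antisymm (convexHull_min himg (hexp.convex (convex_convexHull ℝ _)))
    rw [hFeq] at hdim
    omega
  -- extreme points are rho of facet arrows
  have hEPsub : F.extremePoints ℝ ⊆ rho '' (A : Set (Fin d × Fin d)) := fun x hx =>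
    extremePoints_convexHull_subset (hexp.isExtreme.extremePoints_subset_extremePoints hx)
  have hEPF : F.extremePoints ℝ ⊆ F := extremePoints_subset
  rw [affineIndependent_iff] at hdep
  push_neg at hdep
  obtain ⟨s, w, hw0, hwc, i₀, hi₀s, hi₀⟩ := hdep
  choose E hEA hErho using fun i : F.extremePoints ℝ => hEPsub i.2
  have hiF : ∀ i : F.extremePoints ℝ, (i : Fin d → ℝ) ∈ F := fun i => hEPF i.2
  have hEfacet : ∀ i, a (E i).1 - a (E i).2 = m := fun i => by
    rw [← hlrho, hErho]; exact hfacet _ (hiF i)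
  have hEne : ∀ i, (E i).1 ≠ (E i).2 := by
    intro i heq
    have hfi := hEfacet i
    rw [heq, sub_self] at hfi
    exact absurd hfi.symm (ne_of_gt hm)
  have hicoe : ∀ i j : F.extremePoints ℝ, E i = E j → i = j := fun i j hij =>
    Subtype.ext (by rw [← hErho, ← hErho, hij])
  set t := s.filter (fun i => w i ≠ 0) with ht
  have hi₀t : i₀ ∈ t := Finset.mem_filter.2 ⟨hi₀s, hi₀⟩
  have hwt : ∀ i ∈ t, w i ≠ 0 := fun i hi => (Finset.mem_filter.1 hi).2
  have hwc' : ∑ i ∈ t, w i • (i : Fin d → ℝ) = 0 := by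
    rw [← hwc]
    apply Finset.sum_subset (Finset.filter_subset _ _)
    intro i his hit
    have hwi : w i = 0 := by
      by_contra hw
      exact hit (Finset.mem_filter.2 ⟨his, hw⟩)
    rw [hwi, zero_smul]
  have hcoord : ∀ x : Fin d, ∑ i ∈ t, w i * ((i : Fin d → ℝ) x) = 0 := by
    intro x
    have hcf := congrFun hwc' x
    simpa using hcf
  set R : Fin d → Fin d → Prop :=
    fun x y => ∃ i ∈ t, E i = (x, y) ∨ E i = (y, x) with hR
  have hRsymm : ∀ x y, R x y → R y x := by
    rintro x y ⟨i, hit, hi | hi⟩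
    exacts [⟨i, hit, Or.inr hi⟩, ⟨i, hit, Or.inl hi⟩]
  have hRne : ∀ x y, R x y → x ≠ y := by
    rintro x y ⟨i, hit, hi | hi⟩ rfl <;> exact hEne i (by rw [hi])
  have hRirr : ∀ x, ¬ R x x := fun x hx => hRne x x hx rfl
  have hnotboth : ∀ (i j : F.extremePoints ℝ) (x y : Fin d),
      E i = (x, y) → E j = (y, x) → False := by
    intro i j x y hi hj
    have h1 := hEfacet i
    have h2 := hEfacet j
    rw [hi] at h1
    rw [hj] at h2
    simp only at h1 h2
    linarith
  have hRdeg : ∀ x y, R x y → ∃ z, z ≠ y ∧ R x z := by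
    intro x y hxy
    by_contra hno
    push_neg at hno
    have huniq : ∀ z, R x z → z = y := fun z hz => by
      by_contra hne; exact hno z hne hz
    obtain ⟨i1, hi1t, hi1⟩ := hxy
    have hxyne : x ≠ y := hRne x y ⟨i1, hi1t, hi1⟩
    have hkey : ∀ i ∈ t, ((i : Fin d → ℝ) x ≠ 0) → i = i1 := by
      intro i hit hix
      have hx12 : x = (E i).1 ∨ x = (E i).2 := by
        by_contra hc
        push_neg at hc
        apply hix
        rw [← hErho i]
        simp [rho, hc.1, hc.2]
      have hEi : E i = (x, y) ∨ E i = (y, x) := by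
        rcases hx12 with h1 | h2
        · have hr : R x (E i).2 := ⟨i, hit, Or.inl (by rw [h1])⟩
          have h2y := huniq _ hr
          left
          rw [← h2y, h1]
        · have hr : R x (E i).1 := ⟨i, hit, Or.inr (by rw [h2])⟩
          have h1y := huniq _ hr
          right
          rw [← h1y, h2]
      rcases hEi with hEi | hEi <;> rcases hi1 with hi1 | hi1
      · exact hicoe _ _ (hEi.trans hi1.symm)
      · exact absurd (hnotboth i i1 x y hEi hi1) id
      · exact absurd (hnotboth i1 i x y hi1 hEi) id
      · exact hicoe _ _ (hEi.trans hi1.symm)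
    have hsingle : ∑ i ∈ t, w i * ((i : Fin d → ℝ) x) = w i1 * ((i1 : Fin d → ℝ) x) := by
      apply Finset.sum_eq_single_of_mem i1 hi1t
      intro i hit hne
      by_cases hz : ((i : Fin d → ℝ) x) = 0
      · rw [hz, mul_zero]
      · exact absurd (hkey i hit hz) hne
    have hval : ((i1 : Fin d → ℝ) x) ≠ 0 := by
      rw [← hErho i1]
      rcases hi1 with hi1 | hi1 <;> rw [hi1] <;> simp [rho, hxyne, Ne.symm hxyne]
    have := hcoord x
    rw [hsingle] at this
    exact hwt i1 hi1t (by
      rcases mul_eq_zero.1 this with h' | h'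
      · exact h'
      · exact absurd h' hval)
  obtain ⟨L, hL3, f, hfinj, hedge⟩ :=
    exists_cycle R hRsymm hRirr hRdeg (E i₀).1 (E i₀).2 ⟨i₀, hi₀t, Or.inl rfl⟩
  have hLpos : 0 < L := by omega
  obtain ⟨ε, hεiff0⟩ : ∃ ε : Fin L → Bool,
      ∀ j, ε j = true ↔ ∃ i ∈ t, E i = (f j, f (succAt hLpos j)) :=
    ⟨fun j => decide (∃ i ∈ t, E i = (f j, f (succAt hLpos j))),
      fun j => iff_of_eq decide_eq_true_eq⟩
  set C : PreCycle (Fin d) := ⟨L, by omega, f, ε, hfinj⟩ with hC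
  have h3 : 3 ≤ C.l := hL3
  have hedge' : ∀ j : Fin C.l, R (C.v j) (C.v (C.nxt j)) := fun j => hedge j
  have hεiff : ∀ j : Fin C.l, C.ε j = true ↔ ∃ i ∈ t, E i = (C.v j, C.v (C.nxt j)) :=
    fun j => hεiff0 j
  have harrT : ∀ j : Fin C.l, ∃ i ∈ t, E i = C.arrow j := by
    intro j
    by_cases hb : ∃ i ∈ t, E i = (C.v j, C.v (C.nxt j))
    · have hεt : C.ε j = true := (hεiff j).2 hb
      rw [PreCycle.arrow, if_pos hεt]
      exact hb
    · have hεf : ¬ (C.ε j = true) := fun hc => hb ((hεiff j).1 hc)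
      rw [PreCycle.arrow, if_neg hεf]
      obtain ⟨i, hit, hi | hi⟩ := hedge' j
      · exact absurd ⟨i, hit, hi⟩ hb
      · exact ⟨i, hit, hi⟩
  have harrA : ∀ j, C.arrow j ∈ A := by
    intro j
    obtain ⟨i, hit, hi⟩ := harrT j
    rw [← hi]
    exact hEA i
  have harrFacet : ∀ j, a (C.arrow j).1 - a (C.arrow j).2 = m := by
    intro j
    obtain ⟨i, hit, hi⟩ := harrT j
    rw [← hi]
    exact hEfacet i
  have hnxtnxt : ∀ j : Fin C.l, C.nxt (C.nxt j) ≠ j := by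
    intro j hj
    have hval : ((j.val + 1) % C.l + 1) % C.l = j.val := congrArg Fin.val hj
    have hjL := j.isLt
    rcases Nat.lt_or_ge (j.val + 1) C.l with h1 | h1
    · rw [Nat.mod_eq_of_lt h1] at hval
      rcases Nat.lt_or_ge (j.val + 1 + 1) C.l with h2 | h2
      · rw [Nat.mod_eq_of_lt h2] at hval; omega
      · have he2 : j.val + 1 + 1 = C.l := by omega
        rw [he2, Nat.mod_self] at hval
        omega
    · have h1' : j.val + 1 = C.l := by omega
      rw [h1', Nat.mod_self, Nat.mod_eq_of_lt (by omega : (0:ℕ) + 1 < C.l)] at hval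
      omega
  have hainj : Function.Injective C.arrow := by
    intro j k hjk
    have hcases : (C.v j = C.v k ∧ C.v (C.nxt j) = C.v (C.nxt k)) ∨
        (C.v j = C.v (C.nxt k) ∧ C.v (C.nxt j) = C.v k) := by
      rw [PreCycle.arrow, PreCycle.arrow] at hjk
      rcases Bool.eq_false_or_eq_true (C.ε j) with hj' | hj' <;>
        rcases Bool.eq_false_or_eq_true (C.ε k) with hk' | hk' <;>
          simp [hj', hk', Prod.mk.injEq] at hjk <;> tauto
    rcases hcases with ⟨h1, _⟩ | ⟨h1, h2⟩
    · exact C.inj h1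
    · exfalso
      have hk1 : j = C.nxt k := C.inj h1
      have hk2 : C.nxt j = k := C.inj h2
      exact hnxtnxt k (by rw [← hk1]; exact hk2)
  -- step relation for a along the cycle
  have hstepR : ∀ j, a (C.v (C.nxt j)) = a (C.v j) - (if C.ε j = true then m else -m) := by
    intro j
    have hf' := harrFacet j
    rw [PreCycle.arrow] at hf'
    by_cases hε : C.ε j = true
    · rw [if_pos hε] at hf'
      rw [if_pos hε]
      simp only at hf'
      linarith
    · rw [if_neg hε] at hf'
      rw [if_neg hε]
      simp only at hf'
      linarith
  -- homogeneity
  have hhom : C.Homogeneous := by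
    have hsumtel : ∑ j, a (C.v (C.nxt j)) = ∑ j, a (C.v j) :=
      Fintype.sum_bijective C.nxt (succAt_bijective C.pos) _ _ (fun j => rfl)
    have h0 : ∑ j : Fin C.l, (if C.ε j = true then m else -m) = 0 := by
      have hcg : ∑ j : Fin C.l, a (C.v (C.nxt j)) =
          ∑ j : Fin C.l, (a (C.v j) - (if C.ε j = true then m else -m)) :=
        Finset.sum_congr rfl (fun j _ => hstepR j)
      rw [Finset.sum_sub_distrib, hsumtel] at hcg
      linarith
    rw [Finset.sum_ite, Finset.sum_const, Finset.sum_const] at h0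
    rw [PreCycle.Homogeneous]
    have hcard := Finset.card_filter_add_card_filter_not
      (s := (univ : Finset (Fin C.l))) (p := fun j => C.ε j = true)
    rw [Finset.card_univ, Fintype.card_fin] at hcard
    set c1 := (univ.filter fun j => C.ε j = true).card
    set c2 := (univ.filter fun j => ¬ (C.ε j = true)).card
    have hcc : (c1 : ℝ) * m = (c2 : ℝ) * m := by
      have : (c1 : ℝ) * m + (c2 : ℝ) * (-m) = 0 := by
        simpa [nsmul_eq_mul] using h0
      linarith
    have hc12 : c1 = c2 := by
      have := mul_right_cancel₀ (ne_of_gt hm) hcc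
      exact_mod_cast this
    omega
  -- the integer function ν
  have hint : ∀ k (hk : k < C.l), ∃ z : ℤ, a (C.v ⟨k, hk⟩) - a (C.v ⟨0, C.pos⟩) = z * m := by
    intro k
    induction k with
    | zero => intro hk; exact ⟨0, by simp⟩
    | succ k ih =>
      intro hk
      have hk' : k < C.l := by omega
      obtain ⟨z, hz⟩ := ih hk'
      have hnx : (⟨k+1, hk⟩ : Fin C.l) = C.nxt ⟨k, hk'⟩ := by
        apply Fin.ext
        show k + 1 = (k + 1) % C.l
        rw [Nat.mod_eq_of_lt hk]
      rw [hnx, hstepR ⟨k, hk'⟩]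
      by_cases hε : C.ε ⟨k, hk'⟩ = true
      · exact ⟨z - 1, by rw [if_pos hε]; push_cast; linarith⟩
      · exact ⟨z + 1, by rw [if_neg hε]; push_cast; linarith⟩
  choose ν hν using fun j : Fin C.l => hint j.val j.isLt
  have hν' : ∀ j : Fin C.l, a (C.v j) - a (C.v ⟨0, C.pos⟩) = (ν j : ℝ) * m := fun j => by
    have := hν j
    simpa using this
  have hνstep : ∀ j, ν (C.nxt j) = if C.ε j = true then ν j - 1 else ν j + 1 := by
    intro j
    have h1 := hν' (C.nxt j)
    rw [hstepR j] at h1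
    have h2 := hν' j
    by_cases hε : C.ε j = true
    · rw [if_pos hε] at h1
      rw [if_pos hε]
      have hr : (ν (C.nxt j) : ℝ) * m = ((ν j - 1 : ℤ) : ℝ) * m := by push_cast; linarith
      exact_mod_cast mul_right_cancel₀ (ne_of_gt hm) hr
    · rw [if_neg hε] at h1
      rw [if_neg hε]
      have hr : (ν (C.nxt j) : ℝ) * m = ((ν j + 1 : ℤ) : ℝ) * m := by push_cast; linarith
      exact_mod_cast mul_right_cancel₀ (ne_of_gt hm) hr
  have hneFin : ((univ : Finset (Fin C.l)).image ν).Nonempty :=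
    (Finset.univ_nonempty_iff.2 ⟨⟨0, C.pos⟩⟩).image ν
  set b := ((univ : Finset (Fin C.l)).image ν).min' hneFin with hb
  refine ⟨C, ⟨harrA, hainj⟩, hhom, fun j => ν j - b, ⟨?_, ?_, ?_⟩, ?_⟩
  · intro j
    show 0 ≤ ν j - b
    have : b ≤ ν j := Finset.min'_le _ _ (Finset.mem_image_of_mem ν (mem_univ j))
    omega
  · intro j
    show ν (C.nxt j) - b = if C.ε j = true then ν j - b - 1 else ν j - b + 1
    rw [hνstep j]
    by_cases hε : C.ε j = true
    · rw [if_pos hε, if_pos hε]; ring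
    · rw [if_neg hε, if_neg hε]; ring
  · obtain ⟨j, _, hj⟩ := Finset.mem_image.1 (((univ : Finset (Fin C.l)).image ν).min'_mem hneFin)
    exact ⟨j, by show ν j - b = 0; rw [hj, hb]; ring⟩
  · intro a' b' n hpath
    show (ν a' - b) - (ν b' - b) ≤ (n : ℤ)
    obtain ⟨p, hp0, hpl, hparr⟩ := hpath
    have htel := path_bound A a m harr_le n p hparr
    rw [hp0, hpl] at htel
    have h1 := hν' a'
    have h2 := hν' b'
    have hLm : ((ν a' : ℝ) - (ν b' : ℝ)) * m = a (C.v a') - a (C.v b') := by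
      rw [sub_mul, ← h1, ← h2]; ring
    have hfin : ((ν a' : ℝ) - (ν b' : ℝ)) ≤ (n : ℝ) :=
      le_of_mul_le_mul_right (by rw [hLm]; exact htel) hm
    have : ((ν a' - ν b' : ℤ) : ℝ) ≤ ((n : ℤ) : ℝ) := by push_cast; linarith
    have hz : ν a' - ν b' ≤ (n : ℤ) := by exact_mod_cast this
    omega
end

section
/- Let G be a connected symmetric directed graph (i.e., (i,j) ∈ A(G) iff (j,i) ∈ A(G)). If the underlying undirected graph of G contains an even cycle, then P_G is not simplicial. -/
open Finset

/-! ### Auxiliary machinery for the proof of `stmt11` -/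

section Aux11

open Finset

/-- standard basis vector -/
def Evec {V : Type*} [DecidableEq V] (i : V) : V → ℝ := fun k => if k = i then 1 else 0

lemma rho_eq {V : Type*} [DecidableEq V] (e : V × V) : rho e = Evec e.1 - Evec e.2 := rfl

lemma rho_bnd {V : Type*} [DecidableEq V] (e : V × V) (k : V) :
    -1 ≤ rho e k ∧ rho e k ≤ 1 := by
  unfold rho; constructor <;> split_ifs <;> norm_num

lemma rho_eq_one {V : Type*} [DecidableEq V] {e : V × V} {k : V} (h : rho e k = 1) :
    k = e.1 ∧ k ≠ e.2 := by
  unfold rho at h; split_ifs at h <;> norm_num at h <;> tauto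

lemma rho_eq_negone {V : Type*} [DecidableEq V] {e : V × V} {k : V} (h : rho e k = -1) :
    k = e.2 ∧ k ≠ e.1 := by
  unfold rho at h; split_ifs at h <;> norm_num at h <;> tauto

lemma rho_fst {V : Type*} [DecidableEq V] {a b : V} (h : a ≠ b) : rho (a, b) a = 1 := by
  simp [rho, h]

lemma rho_snd {V : Type*} [DecidableEq V] {a b : V} (h : a ≠ b) : rho (a, b) b = -1 := by
  simp [rho, h, Ne.symm h]

/-- linear functional `x ↦ ∑ c i * x i` -/
def sumlin {d : ℕ} (c : Fin d → ℝ) : (Fin d → ℝ) →ₗ[ℝ] ℝ where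
  toFun x := ∑ i, c i * x i
  map_add' x y := by simp [mul_add, Finset.sum_add_distrib]
  map_smul' r x := by
    simp only [Pi.smul_apply, smul_eq_mul, RingHom.id_apply, Finset.mul_sum]
    exact Finset.sum_congr rfl fun i _ => by ring

lemma sumlin_rho {d : ℕ} (c : Fin d → ℝ) (e : Fin d × Fin d) :
    sumlin c (rho e) = c e.1 - c e.2 := by
  simp [sumlin, rho, mul_sub, Finset.sum_sub_distrib, mul_ite, mul_one, mul_zero,
    Finset.sum_ite_eq']

lemma hull_le {E : Type*} [AddCommGroup E] [Module ℝ E] (s : Set E) (φ : E →ₗ[ℝ] ℝ) (r : ℝ)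
    (h : ∀ p ∈ s, φ p ≤ r) : ∀ x ∈ convexHull ℝ s, φ x ≤ r := fun _ hx =>
  convexHull_min h (convex_halfSpace_le φ.isLinear r) hx

lemma hull_eq {E : Type*} [AddCommGroup E] [Module ℝ E] (s : Set E) (φ : E →ₗ[ℝ] ℝ) (r : ℝ)
    (h : ∀ p ∈ s, φ p = r) : ∀ x ∈ convexHull ℝ s, φ x = r := fun _ hx =>
  convexHull_min h (convex_hyperplane φ.isLinear r) hx

lemma face_subset {E : Type*} [AddCommGroup E] [Module ℝ E] (s : Finset E) (φ : E →ₗ[ℝ] ℝ)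
    (r : ℝ) (h : ∀ p ∈ s, φ p ≤ r)
    {x : E} (hx : x ∈ convexHull ℝ (s : Set E)) (hφx : φ x = r) :
    x ∈ convexHull ℝ ((s.filter fun p => φ p = r : Finset E) : Set E) := by
  classical
  rw [Finset.convexHull_eq] at hx
  obtain ⟨w, hw0, hw1, hwx⟩ := hx
  set t := s.filter fun p => φ p = r with ht
  have hφsum : ∑ y ∈ s, w y * φ y = r := by
    have h1 : φ x = ∑ y ∈ s, w y * φ y := by
      rw [← hwx, Finset.centerMass_eq_of_sum_1 _ _ hw1]
      simp [map_sum, smul_eq_mul]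
    rw [← h1, hφx]
  have hsum : ∑ y ∈ s, w y * (r - φ y) = 0 := by
    have h2 : ∑ y ∈ s, w y * (r - φ y) = (∑ y ∈ s, w y) * r - ∑ y ∈ s, w y * φ y := by
      rw [Finset.sum_mul, ← Finset.sum_sub_distrib]
      exact Finset.sum_congr rfl fun y _ => by ring
    rw [h2, hw1, hφsum]; ring
  have hterm : ∀ y ∈ s, w y * (r - φ y) = 0 := by
    intro y hy
    exact (Finset.sum_eq_zero_iff_of_nonneg fun y hy =>
      mul_nonneg (hw0 y hy) (sub_nonneg.2 (h y hy))).1 hsum y hy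
  have hkey : ∀ y ∈ s, y ∉ t → w y = 0 := by
    intro y hy hyt
    have hne : φ y ≠ r := fun hc => hyt (Finset.mem_filter.2 ⟨hy, hc⟩)
    rcases mul_eq_zero.1 (hterm y hy) with h' | h'
    · exact h'
    · exact absurd (by linarith [sub_eq_zero.1 h'] : φ y = r) hne
  have hts : ∑ y ∈ t, w y = 1 := by
    rw [← hw1]
    exact (Finset.sum_subset (Finset.filter_subset _ _) fun y hy hyt => hkey y hy hyt).symm ▸ rfl
  have hxt : x = t.centerMass w id := by
    rw [← hwx, Finset.centerMass_eq_of_sum_1 _ _ hw1, Finset.centerMass_eq_of_sum_1 _ _ hts]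
    exact (Finset.sum_subset (Finset.filter_subset _ _) fun y hy hyt => by
      rw [hkey y hy hyt, zero_smul]).symm
  rw [hxt]
  exact Finset.centerMass_mem_convexHull t (fun i hi => hw0 i (Finset.filter_subset _ _ hi))
    (by rw [hts]; norm_num) (fun i hi => by simpa using hi)

lemma vectorSpan_convexHull {E : Type*} [AddCommGroup E] [Module ℝ E] (s : Set E) :
    vectorSpan ℝ (convexHull ℝ s) = vectorSpan ℝ s := by
  rw [← direction_affineSpan, affineSpan_convexHull, direction_affineSpan]

lemma cross_walk {V : Type*} (G : SimpleGraph V) (D : Finset V) [DecidableEq V] :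
    ∀ {a b : V}, G.Walk a b → a ∈ D → b ∉ D → ∃ x y, x ∈ D ∧ y ∉ D ∧ G.Adj x y := by
  intro a b p
  induction p with
  | nil => intro ha hb; exact absurd ha hb
  | @cons u c b h q ih =>
    intro ha hb
    by_cases hc : c ∈ D
    · exact ih hc hb
    · exact ⟨u, c, ha, hc, h⟩

/-- the tight arrows of a coloring, restricted to a vertex set -/
def Tset {d : ℕ} (A : Finset (Fin d × Fin d)) (D : Finset (Fin d)) (χ : Fin d → Bool) :
    Finset (Fin d × Fin d) :=
  A.filter fun e => e.1 ∈ D ∧ e.2 ∈ D ∧ χ e.1 = true ∧ χ e.2 = false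

lemma Tset_mono {d : ℕ} (A : Finset (Fin d × Fin d)) {D D' : Finset (Fin d)}
    {χ χ' : Fin d → Bool}
    (hD : D ⊆ D') (hχ : ∀ v ∈ D, χ' v = χ v) : Tset A D χ ⊆ Tset A D' χ' := by
  intro e he
  simp only [Tset, Finset.mem_filter] at *
  obtain ⟨hA, h1, h2, h3, h4⟩ := he
  exact ⟨hA, hD h1, hD h2, by rw [hχ _ h1]; exact h3, by rw [hχ _ h2]; exact h4⟩

lemma grow {d : ℕ} (A : Finset (Fin d × Fin d))
    (hconn : (SimpleGraph.fromRel (fun i j => (i, j) ∈ A)).Connected)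
    (hsym : ∀ i j : Fin d, (i, j) ∈ A → (j, i) ∈ A) (w₀ : Fin d) :
    ∀ (n : ℕ) (D : Finset (Fin d)) (χ : Fin d → Bool), w₀ ∈ D →
      (∀ u ∈ D, Evec u - Evec w₀ ∈
        Submodule.span ℝ (rho '' (Tset A D χ : Set (Fin d × Fin d)))) →
      D.card + n = d →
      ∃ χ' : Fin d → Bool, (∀ v ∈ D, χ' v = χ v) ∧
        ∀ u, Evec u - Evec w₀ ∈
          Submodule.span ℝ (rho '' (Tset A Finset.univ χ' : Set (Fin d × Fin d))) := by
  intro n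
  induction n with
  | zero =>
    intro D χ hw hinv hcard
    have hDu : D = Finset.univ := Finset.eq_univ_of_card D (by simpa using hcard)
    subst hDu
    exact ⟨χ, fun v _ => rfl, fun u => hinv u (Finset.mem_univ u)⟩
  | succ n ih =>
    intro D χ hw hinv hcard
    have hne : D ≠ Finset.univ := by
      intro h; subst h; simp only [Finset.card_univ, Fintype.card_fin] at hcard; omega
    obtain ⟨u, hu⟩ : ∃ u, u ∉ D := by
      by_contra h; push_neg at h; exact hne (Finset.eq_univ_iff_forall.2 h)
    obtain ⟨p⟩ := hconn.preconnected w₀ u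
    obtain ⟨x, y, hx, hy, hadj⟩ := cross_walk _ D p hw hu
    rw [SimpleGraph.fromRel_adj] at hadj
    have hxyA : (x, y) ∈ A ∧ (y, x) ∈ A := by
      rcases hadj.2 with h | h
      · exact ⟨h, hsym _ _ h⟩
      · exact ⟨hsym _ _ h, h⟩
    set χ' : Fin d → Bool := Function.update χ y (!χ x) with hχ'def
    have hagree : ∀ v ∈ D, χ' v = χ v := fun v hv =>
      Function.update_of_ne (by rintro rfl; exact hy hv) _ _
    have hmono : Submodule.span ℝ (rho '' ((Tset A D χ : Set (Fin d × Fin d)))) ≤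
        Submodule.span ℝ (rho '' ((Tset A (insert y D) χ' : Set (Fin d × Fin d)))) := by
      refine Submodule.span_mono (Set.image_mono (f := rho) ?_)
      exact Finset.coe_subset.2 (Tset_mono A (Finset.subset_insert y D) hagree)
    have hxx : χ' x = χ x := hagree x hx
    have hyy : χ' y = !χ x := Function.update_self _ _ _
    have hyx : Evec y - Evec x ∈
        Submodule.span ℝ (rho '' (Tset A (insert y D) χ' : Set (Fin d × Fin d))) := by
      cases hcx : χ x with
      | true =>
        have harr : ((x, y) : Fin d × Fin d) ∈ Tset A (insert y D) χ' := by
          simp only [Tset, Finset.mem_filter]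
          exact ⟨hxyA.1, Finset.mem_insert_of_mem hx, Finset.mem_insert_self y D,
            by rw [hxx, hcx], by rw [hyy, hcx]; rfl⟩
        have h1 : rho (x, y) ∈
            Submodule.span ℝ (rho '' (Tset A (insert y D) χ' : Set (Fin d × Fin d))) :=
          Submodule.subset_span ⟨_, by exact_mod_cast harr, rfl⟩
        have h2 := Submodule.neg_mem _ h1
        rw [rho_eq] at h2
        simpa [neg_sub] using h2
      | false =>
        have harr : ((y, x) : Fin d × Fin d) ∈ Tset A (insert y D) χ' := by
          simp only [Tset, Finset.mem_filter]
          exact ⟨hxyA.2, Finset.mem_insert_self y D, Finset.mem_insert_of_mem hx,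
            by rw [hyy, hcx]; rfl, by rw [hxx, hcx]⟩
        have h1 : rho (y, x) ∈
            Submodule.span ℝ (rho '' (Tset A (insert y D) χ' : Set (Fin d × Fin d))) :=
          Submodule.subset_span ⟨_, by exact_mod_cast harr, rfl⟩
        rw [rho_eq] at h1
        exact h1
    have hinv' : ∀ u' ∈ insert y D, Evec u' - Evec w₀ ∈
        Submodule.span ℝ (rho '' (Tset A (insert y D) χ' : Set (Fin d × Fin d))) := by
      intro u' hu'
      rcases Finset.mem_insert.1 hu' with h | h
      · subst h
        have := Submodule.add_mem _ hyx (hmono (hinv x hx))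
        rwa [sub_add_sub_cancel] at this
      · exact hmono (hinv u' h)
    have hcard' : (insert y D).card + n = d := by
      rw [Finset.card_insert_of_notMem hy]; omega
    obtain ⟨χ'', h1, h2⟩ := ih (insert y D) χ' (Finset.mem_insert_of_mem hw) hinv' hcard'
    exact ⟨χ'', fun v hv => by rw [h1 v (Finset.mem_insert_of_mem hv), hagree v hv], h2⟩

lemma par_succ {l : ℕ} (hl : Even l) {m : ℕ} (hm : m < l) :
    Even ((m + 1) % l) ↔ ¬ Even m := by
  rcases Nat.lt_or_ge (m + 1) l with h | h
  · rw [Nat.mod_eq_of_lt h, Nat.even_add_one]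
  · have h1 : m + 1 = l := by omega
    rw [h1, Nat.mod_self]
    have h2 : Even (m + 1) := h1 ▸ hl
    rw [Nat.even_add_one] at h2
    simpa using h2

lemma no2cycle {l : ℕ} (hl : 3 ≤ l) {m : ℕ} (hm : m < l) : ((m + 1) % l + 1) % l ≠ m := by
  rcases Nat.lt_or_ge (m + 1) l with h | h
  · rw [Nat.mod_eq_of_lt h]
    rcases Nat.lt_or_ge (m + 2) l with h2 | h2
    · rw [Nat.mod_eq_of_lt h2]; omega
    · have h3 : m + 2 = l := by omega
      rw [← h3, Nat.mod_self]; omega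
  · have h1 : m + 1 = l := by omega
    rw [h1, Nat.mod_self, Nat.mod_eq_of_lt (by omega : 1 < l)]; omega

end Aux11

/-- for a connected symmetric directed graph whose underlying undirected
graph contains an even cycle, `P_G` is not simplicial. -/
theorem stmt11 {d : ℕ} (A : Finset (Fin d × Fin d)) (hconn : GConnected A)
    (hsym : ∀ i j : Fin d, (i, j) ∈ A → (j, i) ∈ A)
    (hec : HasEvenCycle A) :
    ¬ Simplicial (polyG A) := by
  classical
  intro hs
  obtain ⟨C, hl3, hlev, hcyc⟩ := hec
  have hpos : 0 < C.l := C.pos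
  have hcyc2 : ∀ j, (C.v j, C.v (C.nxt j)) ∈ A ∧ (C.v (C.nxt j), C.v j) ∈ A := by
    intro j; rcases hcyc j with h | h
    · exact ⟨h, hsym _ _ h⟩
    · exact ⟨hsym _ _ h, h⟩
  set w₀ : Fin d := C.v ⟨0, hpos⟩ with hw₀def
  set χ₀ : Fin d → Bool :=
    Function.extend C.v (fun j => decide (Even (j : ℕ))) (fun _ => false) with hχ₀def
  have hext : ∀ j, χ₀ (C.v j) = decide (Even (j : ℕ)) := fun j =>
    C.inj.extend_apply _ _ j
  have hnxtval : ∀ j : Fin C.l, ((C.nxt j : Fin C.l) : ℕ) = ((j : ℕ) + 1) % C.l :=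
    fun j => rfl
  set D₀ : Finset (Fin d) := Finset.image C.v Finset.univ with hD₀def
  have hmemD₀ : ∀ j, C.v j ∈ D₀ := fun j => Finset.mem_image_of_mem _ (Finset.mem_univ j)
  have hkeybase : ∀ m (hm : m < C.l), Evec (C.v ⟨m, hm⟩) - Evec w₀ ∈
      Submodule.span ℝ (rho '' (Tset A D₀ χ₀ : Set (Fin d × Fin d))) := by
    intro m
    induction m with
    | zero =>
      intro hm
      have h0 : (⟨0, hm⟩ : Fin C.l) = ⟨0, hpos⟩ := rfl
      rw [h0, ← hw₀def, sub_self]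
      exact Submodule.zero_mem _
    | succ m ihm =>
      intro hm
      have hm' : m < C.l := Nat.lt_of_succ_lt hm
      have hnxt : C.nxt ⟨m, hm'⟩ = ⟨m + 1, hm⟩ := Fin.ext (by
        rw [hnxtval]; exact Nat.mod_eq_of_lt hm)
      have hstep : Evec (C.v ⟨m + 1, hm⟩) - Evec (C.v ⟨m, hm'⟩) ∈
          Submodule.span ℝ (rho '' (Tset A D₀ χ₀ : Set (Fin d × Fin d))) := by
        by_cases hEm : Even m
        · have harr : (C.v ⟨m, hm'⟩, C.v ⟨m + 1, hm⟩) ∈ Tset A D₀ χ₀ := by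
            rw [← hnxt]
            refine Finset.mem_filter.2 ⟨(hcyc2 _).1, hmemD₀ _, hmemD₀ _, ?_, ?_⟩
            · rw [hext]; simpa using hEm
            · rw [hext, hnxtval]
              simp [par_succ hlev hm', hEm]
          have h1 : rho (C.v ⟨m, hm'⟩, C.v ⟨m + 1, hm⟩) ∈
              Submodule.span ℝ (rho '' (Tset A D₀ χ₀ : Set (Fin d × Fin d))) :=
            Submodule.subset_span ⟨_, by exact_mod_cast harr, rfl⟩
          have h2 := Submodule.neg_mem _ h1
          rw [rho_eq] at h2
          simpa [neg_sub] using h2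
        · have harr : (C.v ⟨m + 1, hm⟩, C.v ⟨m, hm'⟩) ∈ Tset A D₀ χ₀ := by
            rw [← hnxt]
            refine Finset.mem_filter.2 ⟨(hcyc2 _).2, hmemD₀ _, hmemD₀ _, ?_, ?_⟩
            · rw [hext, hnxtval]
              simp [par_succ hlev hm', hEm]
            · rw [hext]; simpa using hEm
          have h1 : rho (C.v ⟨m + 1, hm⟩, C.v ⟨m, hm'⟩) ∈
              Submodule.span ℝ (rho '' (Tset A D₀ χ₀ : Set (Fin d × Fin d))) :=
            Submodule.subset_span ⟨_, by exact_mod_cast harr, rfl⟩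
          rw [rho_eq] at h1
          exact h1
      have hadd := Submodule.add_mem _ hstep (ihm hm')
      rwa [sub_add_sub_cancel] at hadd
  have hbase : ∀ u ∈ D₀, Evec u - Evec w₀ ∈
      Submodule.span ℝ (rho '' (Tset A D₀ χ₀ : Set (Fin d × Fin d))) := by
    intro u hu
    obtain ⟨j, -, rfl⟩ := Finset.mem_image.1 hu
    exact hkeybase j.1 j.2
  have hcard0 : D₀.card + (d - D₀.card) = d := by
    have h := Finset.card_le_univ D₀
    simp only [Finset.card_univ, Fintype.card_fin] at h
    omega
  obtain ⟨χ, hχD₀, hspan⟩ := grow A hconn hsym w₀ (d - D₀.card) D₀ χ₀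
    (hw₀def ▸ hmemD₀ ⟨0, hpos⟩) hbase hcard0
  have hχv : ∀ j : Fin C.l, χ (C.v j) = decide (Even (j : ℕ)) := fun j => by
    rw [hχD₀ _ (hmemD₀ j), hext]
  set T : Finset (Fin d × Fin d) := Tset A Finset.univ χ with hTdef
  have hmemT : ∀ e, e ∈ T ↔ e ∈ A ∧ χ e.1 = true ∧ χ e.2 = false := by
    intro e; simp [hTdef, Tset]
  have hTA : T ⊆ A := Finset.filter_subset _ _
  set c : Fin d → ℝ := fun i => if χ i then 1 else 0 with hcdef
  set φ : (Fin d → ℝ) →ₗ[ℝ] ℝ := sumlin c with hφdef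
  have hφrho : ∀ e : Fin d × Fin d, φ (rho e) = c e.1 - c e.2 := sumlin_rho c
  have hφT : ∀ e ∈ T, φ (rho e) = 1 := by
    intro e he
    obtain ⟨-, h1, h2⟩ := (hmemT e).1 he
    rw [hφrho]
    simp [hcdef, h1, h2]
  have hφA : ∀ e ∈ A, φ (rho e) ≤ 1 := by
    intro e _
    rw [hφrho]
    simp only [hcdef]
    split_ifs <;> norm_num
  have hφAiff : ∀ e ∈ A, φ (rho e) = 1 → e ∈ T := by
    intro e he h1
    rw [hφrho] at h1
    cases hc1 : χ e.1 <;> cases hc2 : χ e.2 <;>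
      simp only [hcdef, hc1, hc2, if_true, if_false] at h1 <;>
      first
      | exact (hmemT e).2 ⟨he, hc1, hc2⟩
      | norm_num at h1
  -- cycle arrows
  set aj : Fin C.l → Fin d × Fin d := fun j =>
    if Even (j : ℕ) then (C.v j, C.v (C.nxt j)) else (C.v (C.nxt j), C.v j) with hajdef
  have hχnxt : ∀ j : Fin C.l, χ (C.v (C.nxt j)) = !χ (C.v j) := by
    intro j
    rw [hχv, hχv, hnxtval]
    by_cases hEj : Even (j : ℕ)
    · simp [par_succ hlev j.isLt, hEj]
    · simp [par_succ hlev j.isLt, hEj]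
  have hajT : ∀ j, aj j ∈ T := by
    intro j
    by_cases hEj : Even (j : ℕ)
    · have h1 : aj j = (C.v j, C.v (C.nxt j)) := by simp [hajdef, hEj]
      rw [h1]
      refine (hmemT _).2 ⟨(hcyc2 j).1, ?_, ?_⟩
      · rw [hχv]; simpa using hEj
      · rw [hχnxt, hχv]; simpa using hEj
    · have h1 : aj j = (C.v (C.nxt j), C.v j) := by simp [hajdef, hEj]
      rw [h1]
      refine (hmemT _).2 ⟨(hcyc2 j).2, ?_, ?_⟩
      · rw [hχnxt, hχv]; simpa using hEj
      · rw [hχv]; simpa using hEj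
  have hajne : ∀ j, (aj j).1 ≠ (aj j).2 := by
    intro j h
    obtain ⟨-, h1, h2⟩ := (hmemT _).1 (hajT j)
    rw [h] at h1
    rw [h1] at h2
    exact Bool.noConfusion h2
  -- the polytope and the face
  set P : Set (Fin d → ℝ) := polyG A with hPdef
  set F : Set (Fin d → ℝ) := convexHull ℝ (rho '' (T : Set (Fin d × Fin d))) with hFdef
  have hPeq : P = convexHull ℝ (rho '' (A : Set (Fin d × Fin d))) := rfl
  have hFP : F ⊆ P := convexHull_mono (Set.image_mono (f := rho) (Finset.coe_subset.2 hTA))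
  have hPle1 : ∀ x ∈ P, φ x ≤ 1 := by
    rw [hPeq]
    refine hull_le _ φ 1 ?_
    rintro p ⟨e, he, rfl⟩
    exact hφA e he
  have hφF : ∀ x ∈ F, φ x = 1 := by
    rw [hFdef]
    refine hull_eq _ φ 1 ?_
    rintro p ⟨e, he, rfl⟩
    exact hφT e he
  set j0 : Fin C.l := ⟨0, hpos⟩ with hj0def
  set x₀ : Fin d → ℝ := rho (aj j0) with hx₀def
  have hx₀mem : x₀ ∈ rho '' (T : Set (Fin d × Fin d)) := ⟨aj j0, hajT j0, rfl⟩
  have hx₀F : x₀ ∈ F := subset_convexHull ℝ _ hx₀mem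
  -- vector spans
  set N := vectorSpan ℝ (rho '' (A : Set (Fin d × Fin d))) with hNdef
  set W := vectorSpan ℝ (rho '' (T : Set (Fin d × Fin d))) with hWdef
  have hWN : W ≤ N := vectorSpan_mono ℝ (Set.image_mono (f := rho) (Finset.coe_subset.2 hTA))
  have hspan' : ∀ u, Evec u - Evec w₀ ∈
      Submodule.span ℝ (rho '' (T : Set (Fin d × Fin d))) := by
    intro u; rw [hTdef]; exact hspan u
  have hrhospan : ∀ e : Fin d × Fin d,
      rho e ∈ Submodule.span ℝ (rho '' (T : Set (Fin d × Fin d))) := by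
    intro e
    have h3 := Submodule.sub_mem _ (hspan' e.1) (hspan' e.2)
    rwa [sub_sub_sub_cancel_right, ← rho_eq] at h3
  have hspanT_le : Submodule.span ℝ (rho '' (T : Set (Fin d × Fin d))) ≤
      W ⊔ Submodule.span ℝ {x₀} := by
    rw [Submodule.span_le]
    rintro p ⟨f, hf, rfl⟩
    have h1 : rho f - x₀ ∈ W := vsub_mem_vectorSpan ℝ ⟨f, hf, rfl⟩ hx₀mem
    have h2 : x₀ ∈ Submodule.span ℝ {x₀} := Submodule.mem_span_singleton_self x₀
    have h3 := Submodule.add_mem _ (Submodule.mem_sup_left h1) (Submodule.mem_sup_right h2)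
    rw [sub_add_cancel] at h3
    exact h3
  have hNle : N ≤ W ⊔ Submodule.span ℝ {x₀} := by
    rw [hNdef, vectorSpan_def, Submodule.span_le]
    rintro p hp
    obtain ⟨p1, hp1, p2, hp2, rfl⟩ := Set.mem_vsub.1 hp
    obtain ⟨e1, he1, rfl⟩ := hp1
    obtain ⟨e2, he2, rfl⟩ := hp2
    rw [vsub_eq_sub]
    exact hspanT_le (Submodule.sub_mem _ (hrhospan e1) (hrhospan e2))
  have haj0A : aj j0 ∈ A := hTA (hajT j0)
  have haj0A' : ((aj j0).2, (aj j0).1) ∈ A := hsym _ _ (by rwa [Prod.mk.eta])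
  have hswap : rho ((aj j0).2, (aj j0).1) = -x₀ := by
    rw [hx₀def]
    funext k
    simp only [rho, Pi.neg_apply]
    ring
  have hx₀N : x₀ ∈ N := by
    have hv : x₀ -ᵥ rho ((aj j0).2, (aj j0).1) ∈ N :=
      vsub_mem_vectorSpan ℝ ⟨aj j0, haj0A, rfl⟩ ⟨((aj j0).2, (aj j0).1), haj0A', rfl⟩
    rw [hswap, vsub_eq_sub, sub_neg_eq_add] at hv
    have hsm := Submodule.smul_mem _ (2⁻¹ : ℝ) hv
    have h12 : (2⁻¹ : ℝ) • (x₀ + x₀) = x₀ := by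
      rw [← two_smul ℝ x₀, smul_smul]
      norm_num
    rwa [h12] at hsm
  have hsupN : N = W ⊔ Submodule.span ℝ {x₀} :=
    le_antisymm hNle (sup_le hWN (Submodule.span_le.2 (Set.singleton_subset_iff.2 hx₀N)))
  have hWker : W ≤ LinearMap.ker φ := by
    rw [hWdef, vectorSpan_def, Submodule.span_le]
    rintro p hp
    obtain ⟨p1, hp1, p2, hp2, rfl⟩ := Set.mem_vsub.1 hp
    obtain ⟨e1, he1, rfl⟩ := hp1
    obtain ⟨e2, he2, rfl⟩ := hp2
    simp only [SetLike.mem_coe, LinearMap.mem_ker, vsub_eq_sub, map_sub]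
    rw [hφT e1 he1, hφT e2 he2]
    ring
  have hφx₀ : φ x₀ = 1 := hφT _ (hajT j0)
  have hx₀ne : x₀ ≠ 0 := by
    intro h
    rw [h, map_zero] at hφx₀
    norm_num at hφx₀
  have hinf : W ⊓ Submodule.span ℝ {x₀} = ⊥ := by
    rw [Submodule.eq_bot_iff]
    intro z hz
    obtain ⟨hzW, hz2⟩ := Submodule.mem_inf.1 hz
    obtain ⟨r, rfl⟩ := Submodule.mem_span_singleton.1 hz2
    have h0 : φ (r • x₀) = 0 := hWker hzW
    rw [map_smul, hφx₀, smul_eq_mul, mul_one] at h0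
    rw [h0, zero_smul]
  have hrank : Module.finrank ℝ N = Module.finrank ℝ W + 1 := by
    have h := Submodule.finrank_sup_add_finrank_inf_eq W (Submodule.span ℝ {x₀})
    rw [hinf, ← hsupN, finrank_bot, finrank_span_singleton hx₀ne] at h
    omega
  have hpdimP : pdim P = Module.finrank ℝ N := by
    rw [hPdef, hNdef]
    unfold pdim polyG
    rw [vectorSpan_convexHull]
  have hpdimF : pdim F = Module.finrank ℝ W := by
    rw [hFdef, hWdef]
    unfold pdim
    rw [vectorSpan_convexHull]
  set φc := LinearMap.toContinuousLinearMap φ with hφcdef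
  have hφc : ∀ x, φc x = φ x := fun x => rfl
  have hfaceP : ∀ x ∈ P, φ x = 1 → x ∈ F := by
    intro x hx h1
    have hx' : x ∈ convexHull ℝ ((A.image rho : Finset (Fin d → ℝ)) : Set (Fin d → ℝ)) := by
      rw [Finset.coe_image]
      exact hx
    have hbnd : ∀ p ∈ A.image rho, φ p ≤ 1 := by
      intro p hp
      obtain ⟨e, he, rfl⟩ := Finset.mem_image.1 hp
      exact hφA e he
    have hsub := face_subset (A.image rho) φ 1 hbnd hx' h1
    refine convexHull_mono ?_ hsub
    intro p hp
    have hp' := Finset.mem_coe.1 hp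
    rw [Finset.mem_filter] at hp'
    obtain ⟨hp1, hp2⟩ := hp'
    obtain ⟨e, he, rfl⟩ := Finset.mem_image.1 hp1
    exact ⟨e, Finset.mem_coe.2 (hφAiff e he hp2), rfl⟩
  have hexp : IsExposed ℝ P F := by
    intro _
    refine ⟨φc, ?_⟩
    ext x
    simp only [Set.mem_setOf_eq]
    constructor
    · intro hxF
      refine ⟨hFP hxF, fun y hy => ?_⟩
      rw [hφc, hφc, hφF x hxF]
      exact hPle1 y hy
    · rintro ⟨hxP, hmax⟩
      have h1 : φ x = 1 := by
        refine le_antisymm (hPle1 x hxP) ?_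
        have h2 := hmax x₀ (hFP hx₀F)
        rw [hφc, hφc, hφx₀] at h2
        exact h2
      exact hfaceP x hxP h1
  have hfacet : IsFacetOf F P := ⟨hexp, ⟨x₀, hx₀F⟩, by rw [hpdimF, hpdimP, hrank]⟩
  -- extreme points of F
  have hqF : ∀ j, rho (aj j) ∈ F := fun j => subset_convexHull ℝ _ ⟨aj j, hajT j, rfl⟩
  have hqext : ∀ j : Fin C.l, rho (aj j) ∈ F.extremePoints ℝ := by
    intro j
    set ψ : (Fin d → ℝ) →ₗ[ℝ] ℝ := sumlin (rho (aj j)) with hψdef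
    have hψrho : ∀ e : Fin d × Fin d, ψ (rho e) = rho (aj j) e.1 - rho (aj j) e.2 :=
      sumlin_rho _
    have hψle : ∀ e : Fin d × Fin d, ψ (rho e) ≤ 2 := by
      intro e
      rw [hψrho]
      have h1 := rho_bnd (aj j) e.1
      have h2 := rho_bnd (aj j) e.2
      linarith [h1.2, h2.1]
    have hψself : ψ (rho (aj j)) = 2 := by
      rw [hψrho, rho_fst (hajne j), rho_snd (hajne j)]
      norm_num
    have hψF : ∀ x ∈ F, ψ x ≤ 2 := by
      rw [hFdef]
      refine hull_le _ ψ 2 ?_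
      rintro p ⟨e, he, rfl⟩
      exact hψle e
    have hface1 : ∀ x ∈ F, ψ x = 2 → x = rho (aj j) := by
      intro x hxF h2
      have hx' : x ∈ convexHull ℝ ((T.image rho : Finset (Fin d → ℝ)) : Set (Fin d → ℝ)) := by
        rw [Finset.coe_image]
        exact hxF
      have hbnd : ∀ p ∈ T.image rho, ψ p ≤ 2 := by
        intro p hp
        obtain ⟨e, he, rfl⟩ := Finset.mem_image.1 hp
        exact hψle e
      have hsub := face_subset (T.image rho) ψ 2 hbnd hx' h2
      have hsing : (((T.image rho).filter fun p => ψ p = 2 : Finset (Fin d → ℝ)) :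
          Set (Fin d → ℝ)) ⊆ {rho (aj j)} := by
        intro p hp
        have hp' := Finset.mem_coe.1 hp
        rw [Finset.mem_filter] at hp'
        obtain ⟨hp1, hp2⟩ := hp'
        obtain ⟨e, he, rfl⟩ := Finset.mem_image.1 hp1
        rw [hψrho] at hp2
        have hb1 := rho_bnd (aj j) e.1
        have hb2 := rho_bnd (aj j) e.2
        have he1 : rho (aj j) e.1 = 1 := by linarith [hb1.2, hb2.1]
        have he2 : rho (aj j) e.2 = -1 := by linarith [hb1.2, hb2.1]
        obtain ⟨hea, -⟩ := rho_eq_one he1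
        obtain ⟨heb, -⟩ := rho_eq_negone he2
        have hee : e = aj j := by
          rw [← Prod.mk.eta (p := e), hea, heb, Prod.mk.eta]
        rw [Set.mem_singleton_iff, hee]
      have hfin := convexHull_mono hsing hsub
      rw [convexHull_singleton] at hfin
      exact hfin
    have hψc : ∀ z, (LinearMap.toContinuousLinearMap ψ) z = ψ z := fun z => rfl
    have hexpq : IsExposed ℝ F {rho (aj j)} := by
      intro _
      refine ⟨LinearMap.toContinuousLinearMap ψ, ?_⟩
      ext x
      simp only [Set.mem_singleton_iff, Set.mem_setOf_eq]
      constructor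
      · rintro rfl
        refine ⟨hqF j, fun y hy => ?_⟩
        rw [hψc, hψc, hψself]
        exact hψF y hy
      · rintro ⟨hxF, hmax⟩
        have h2 : ψ x = 2 := by
          refine le_antisymm (hψF x hxF) ?_
          have h3 := hmax _ (hqF j)
          rw [hψc, hψc, hψself] at h3
          exact h3
        exact hface1 x hxF h2
    exact (hexpq.isExtreme).mem_extremePoints
  -- injectivity
  have hajinj : Function.Injective fun j => rho (aj j) := by
    intro j j' h
    simp only at h
    have h1 : rho (aj j) (aj j').1 = 1 := by
      rw [h]
      exact rho_fst (hajne j')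
    have h2 : rho (aj j) (aj j').2 = -1 := by
      rw [h]
      exact rho_snd (hajne j')
    obtain ⟨ha, -⟩ := rho_eq_one h1
    obtain ⟨hb, -⟩ := rho_eq_negone h2
    have hee : aj j' = aj j := by
      rw [← Prod.mk.eta (p := aj j'), ha, hb, Prod.mk.eta]
    by_cases hEj : Even (j : ℕ) <;> by_cases hEj' : Even ((j' : ℕ)) <;>
      simp only [hajdef, hEj, hEj', if_true, if_false] at hee
    · exact (C.inj (congrArg Prod.fst hee)).symm
    · exfalso
      have e1 : C.nxt j' = j := C.inj (congrArg Prod.fst hee)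
      have e2 : j' = C.nxt j := C.inj (congrArg Prod.snd hee)
      rw [e2] at e1
      have e3 := congrArg Fin.val e1
      rw [hnxtval, hnxtval] at e3
      exact no2cycle hl3 j.isLt e3
    · exfalso
      have e1 : j' = C.nxt j := C.inj (congrArg Prod.fst hee)
      have e2 : C.nxt j' = j := C.inj (congrArg Prod.snd hee)
      rw [e1] at e2
      have e3 := congrArg Fin.val e2
      rw [hnxtval, hnxtval] at e3
      exact no2cycle hl3 j.isLt e3
    · exact (C.inj (congrArg Prod.snd hee)).symm
  -- affine dependence
  have hAI := hs F hfacet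
  have hAI2 : AffineIndependent ℝ fun j : Fin C.l => rho (aj j) := by
    have hg : Function.Injective fun j : Fin C.l =>
        (⟨rho (aj j), hqext j⟩ : (F.extremePoints ℝ)) := by
      intro j j' h
      exact hajinj (congrArg Subtype.val h)
    exact AffineIndependent.comp_embedding ⟨_, hg⟩ hAI
  rw [affineIndependent_iff_of_fintype] at hAI2
  set wt : Fin C.l → ℝ := fun j => if Even (j : ℕ) then 1 else -1 with hwtdef
  have hwt0 : ∑ j, wt j = 0 := by
    have h1 : ∀ j : Fin C.l, wt j = (-1 : ℝ) ^ (j : ℕ) := by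
      intro j
      by_cases hEj : Even (j : ℕ)
      · rw [hwtdef]; simp [hEj, Even.neg_one_pow hEj]
      · rw [hwtdef]; simp [hEj, Odd.neg_one_pow (Nat.not_even_iff_odd.1 hEj)]
    rw [Finset.sum_congr rfl fun j _ => h1 j,
      Fin.sum_univ_eq_sum_range (fun m => (-1 : ℝ) ^ m), neg_one_geom_sum]
    simp [hlev]
  haveI : NeZero C.l := ⟨hpos.ne'⟩
  have hterm : ∀ j : Fin C.l, wt j • rho (aj j) = Evec (C.v j) - Evec (C.v (C.nxt j)) := by
    intro j
    by_cases hEj : Even (j : ℕ)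
    · simp only [hwtdef, hajdef, hEj, if_true]
      rw [rho_eq, one_smul]
    · simp only [hwtdef, hajdef, hEj, if_false]
      rw [rho_eq]
      simp [neg_sub]
  have hnxt1 : ∀ j : Fin C.l, C.nxt j = j + 1 := by
    intro j
    apply Fin.ext
    rw [hnxtval, Fin.val_add, Fin.val_one', Nat.mod_eq_of_lt (show 1 < C.l by omega)]
  have hsum0 : ∑ j, wt j • rho (aj j) = 0 := by
    rw [Finset.sum_congr rfl fun j _ => hterm j, Finset.sum_sub_distrib]
    have hre : ∑ j : Fin C.l, Evec (C.v (C.nxt j)) = ∑ j : Fin C.l, Evec (C.v j) := by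
      rw [Finset.sum_congr rfl fun j _ => by rw [hnxt1 j]]
      exact Fintype.sum_equiv (Equiv.addRight 1) _ _ fun j => rfl
    rw [hre, sub_self]
  have hvsub : Finset.univ.weightedVSub (fun j : Fin C.l => rho (aj j)) wt = 0 := by
    rw [Finset.weightedVSub_eq_weightedVSubOfPoint_of_sum_eq_zero _ _ _ hwt0
      (0 : Fin d → ℝ), Finset.weightedVSubOfPoint_apply]
    simpa [vsub_eq_sub] using hsum0
  have hzero := hAI2 wt hwt0 hvsub ⟨0, hpos⟩
  rw [hwtdef] at hzero
  norm_num at hzero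
end
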